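/- For every positive integer n, there are only finitely many isomorphism classes of finite subgroups of GL(n, ℤ). In particular, there is a uniform bound c_n on the cardinality of any finite subgroup of GL(n, ℤ). -/

import Mathlib

open Matrix

section MinkowskiAux

open Finset

variable {n : ℕ}

private lemma dvd_mul_entries {x y : ℤ} {M N : Matrix (Fin n) (Fin n) ℤ}
    (hM : ∀ i j, x ∣ M i j) (hN : ∀ i j, y ∣ N i j) : ∀ i j, x * y ∣ (M * N) i j := by
  intro i j
  rw [Matrix.mul_apply]
  exact Finset.dvd_sum fun k _ => mul_dvd_mul (hM i k) (hN k j)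

private lemma dvd_mul_entries_left {x : ℤ} {M N : Matrix (Fin n) (Fin n) ℤ}
    (hM : ∀ i j, x ∣ M i j) : ∀ i j, x ∣ (M * N) i j := by
  intro i j
  rw [Matrix.mul_apply]
  exact Finset.dvd_sum fun k _ => dvd_mul_of_dvd_left (hM i k) _

private lemma dvd_pow_entries {a : ℕ} {M : Matrix (Fin n) (Fin n) ℤ}
    (hM : ∀ i j, (3:ℤ)^a ∣ M i j) (m : ℕ) :
    ∀ i j, (3:ℤ)^(2*a) ∣ (M ^ (m+2)) i j := by
  have h : M ^ (m+2) = M * (M * M ^ m) := by rw [pow_succ', pow_succ']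
  rw [h, two_mul, pow_add]
  exact dvd_mul_entries hM (dvd_mul_entries_left hM)

private lemma key_step {p : ℕ} (hp : p.Prime) {M : Matrix (Fin n) (Fin n) ℤ}
    (h : (1 + M) ^ p = 1) {a : ℕ} (ha : 1 ≤ a) (hM : ∀ i j, (3:ℤ)^a ∣ M i j) :
    ∀ i j, (3:ℤ)^(a+1) ∣ M i j := by
  have hc : (M + 1) ^ p = ∑ m ∈ Finset.range (p+1), M ^ m * 1 ^ (p-m) * (p.choose m : Matrix (Fin n) (Fin n) ℤ) :=
    (Commute.one_right M).add_pow p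
  simp only [one_pow, mul_one] at hc
  rw [add_comm M 1, h] at hc
  have hform : ∀ (X : Matrix (Fin n) (Fin n) ℤ) (c : ℕ), X * (c : Matrix (Fin n) (Fin n) ℤ) = c • X :=
    fun X c => by rw [← (Nat.cast_commute c X).eq, ← nsmul_eq_mul]
  have hsplit : ∑ m ∈ Finset.range (p+1), M ^ m * (p.choose m : Matrix (Fin n) (Fin n) ℤ)
      = (∑ m ∈ Finset.range (p-1), M ^ (m+2) * (p.choose (m+2) : Matrix (Fin n) (Fin n) ℤ))
        + (p : Matrix (Fin n) (Fin n) ℤ) * M + 1 := by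
    rw [Finset.sum_range_succ']
    have h1 : p = (p - 1) + 1 := (Nat.succ_pred_eq_of_pos hp.pos).symm
    rw [h1, Finset.sum_range_succ']
    simp only [Nat.choose_one_right, ← h1, pow_one, pow_zero, Nat.choose_zero_right,
      Nat.cast_one, one_mul, mul_one]
    have : M ^ (0+1) * ((p.choose (0+1) : ℕ) : Matrix (Fin n) (Fin n) ℤ) = (p : Matrix (Fin n) (Fin n) ℤ) * M := by
      rw [pow_one, Nat.choose_one_right]
      exact (Nat.cast_commute p M).eq.symm
    rw [this]
  rw [hsplit] at hc
  have hS : (p • M : Matrix (Fin n) (Fin n) ℤ)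
      = -∑ m ∈ Finset.range (p-1), (p.choose (m+2)) • (M ^ (m+2) : Matrix (Fin n) (Fin n) ℤ) := by
    simp only [← hform, nsmul_eq_mul]
    rw [(Nat.cast_commute p M).eq.symm]
    linear_combination (norm := abel) hc.symm
  intro i j
  have hentry : (p : ℤ) * M i j
      = -∑ m ∈ Finset.range (p-1), ((p.choose (m+2) : ℤ) * (M ^ (m+2)) i j) := by
    have h2 := congrFun (congrFun hS i) j
    simp only [Matrix.neg_apply, Matrix.sum_apply, Matrix.smul_apply] at h2
    simpa only [nsmul_eq_mul] using h2
  by_cases hp3 : p = 3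
  · subst hp3
    have hM3 : ∀ i j, (3:ℤ)^(a+(a+a)) ∣ (M ^ (1+2)) i j := by
      have h3 : M ^ (1+2) = M * (M * M) := by rw [pow_succ', pow_succ', pow_one]
      rw [h3, pow_add, pow_add]
      exact dvd_mul_entries hM (dvd_mul_entries hM hM)
    have hdvd : (3:ℤ)^(a+2) ∣ (3:ℤ) * M i j := by
      have he : (3:ℤ) * M i j = -∑ m ∈ Finset.range (3-1), ((Nat.choose 3 (m+2) : ℤ) * (M ^ (m+2)) i j) := by
        exact_mod_cast hentry
      rw [he]
      refine dvd_neg.mpr (Finset.dvd_sum fun m hm => ?_)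
      have hm2 : m < 2 := by simpa using hm
      interval_cases m
      · have h1 : (3:ℤ)^(a+1) ∣ (M ^ (0+2)) i j :=
          dvd_trans (pow_dvd_pow 3 (by omega)) (dvd_pow_entries hM 0 i j)
        have hch : ((Nat.choose 3 (0+2) : ℕ) : ℤ) = 3 := by norm_num
        rw [hch]
        calc (3:ℤ)^(a+2) = 3 * 3^(a+1) := by ring
        _ ∣ 3 * (M ^ (0+2)) i j := mul_dvd_mul_left 3 h1
      · have hch : ((Nat.choose 3 (1+2) : ℕ) : ℤ) = 1 := by norm_num
        rw [hch, one_mul]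
        exact dvd_trans (pow_dvd_pow 3 (by omega)) (hM3 i j)
    have h3 : (3:ℤ)^(a+2) = 3 * 3^(a+1) := by ring
    rw [h3] at hdvd
    exact (mul_dvd_mul_iff_left (by norm_num : (3:ℤ) ≠ 0)).mp hdvd
  · have hdvd : (3:ℤ)^(a+1) ∣ (p : ℤ) * M i j := by
      rw [hentry]
      refine dvd_neg.mpr (Finset.dvd_sum fun m _ => ?_)
      exact dvd_mul_of_dvd_right
        (dvd_trans (pow_dvd_pow 3 (by omega)) (dvd_pow_entries hM m i j)) _
    have hcop : IsCoprime ((3:ℤ)^(a+1)) (p : ℤ) := by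
      refine IsCoprime.pow_left ?_
      rw [Int.isCoprime_iff_gcd_eq_one]
      exact (Nat.coprime_primes (by norm_num) hp).mpr (fun hh => hp3 hh.symm)
    exact hcop.dvd_of_dvd_mul_left hdvd

private lemma key_prime {p : ℕ} (hp : p.Prime) {M : Matrix (Fin n) (Fin n) ℤ}
    (h : (1 + M) ^ p = 1) (hM : ∀ i j, (3:ℤ) ∣ M i j) : M = 0 := by
  have hall : ∀ a : ℕ, 1 ≤ a → ∀ i j, (3:ℤ)^a ∣ M i j := by
    intro a
    induction a with
    | zero => omega
    | succ b ih =>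
      intro _
      rcases Nat.eq_zero_or_pos b with hb | hb
      · subst hb; simpa using hM
      · exact key_step hp h hb (ih hb)
  ext i j
  simp only [Matrix.zero_apply]
  by_contra hne
  have habs : 0 < |M i j| := abs_pos.mpr hne
  set a := (M i j).natAbs + 1 with ha
  have hdvd := hall a (by omega) i j
  have hle : (3:ℤ)^a ≤ |M i j| := Int.le_of_dvd habs ((dvd_abs _ _).mpr hdvd)
  have : ((M i j).natAbs : ℤ) < 3^a := by
    have h1 : (M i j).natAbs < 3 ^ a := by
      calc (M i j).natAbs < 3 ^ ((M i j).natAbs) := Nat.lt_pow_self (by norm_num)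
      _ ≤ 3 ^ a := Nat.pow_le_pow_right (by norm_num) (by omega)
    exact_mod_cast h1
  rw [Int.abs_eq_natAbs] at hle
  omega

private lemma key_all : ∀ m : ℕ, 1 ≤ m → ∀ M : Matrix (Fin n) (Fin n) ℤ,
    (1 + M) ^ m = 1 → (∀ i j, (3:ℤ) ∣ M i j) → M = 0 := by
  intro m
  induction m using Nat.strong_induction_on with
  | _ m ih =>
    intro hm M h hM
    rcases Nat.eq_or_lt_of_le hm with h1 | h1
    · rw [← h1, pow_one] at h
      rwa [add_eq_left] at h
    · have h2 : 2 ≤ m := h1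
      set p := m.minFac with hp
      have hpp : p.Prime := Nat.minFac_prime (by omega)
      have hpd : p ∣ m := Nat.minFac_dvd m
      set N := (1 + M) ^ (m / p) - 1 with hN
      have hNpow : (1 + N) ^ p = 1 := by
        rw [hN]
        rw [add_sub_cancel]
        rw [← pow_mul, Nat.div_mul_cancel hpd, h]
      have hNd : ∀ i j, (3:ℤ) ∣ N i j := by
        -- reduce mod 3 via ring hom
        intro i j
        have : ∀ (K : Matrix (Fin n) (Fin n) ℤ) (k : ℕ), (∀ i j, (3:ℤ) ∣ K i j) →
            ∀ i j, (3:ℤ) ∣ ((1 + K)^k - 1) i j := by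
          intro K k hK
          induction k with
          | zero => simp
          | succ t iht =>
            intro i j
            have hrw : (1 + K)^(t+1) - 1 = ((1 + K)^t - 1) * (1 + K) + K := by
              rw [pow_succ]; noncomm_ring
            rw [hrw]
            simp only [Matrix.add_apply]
            refine dvd_add ?_ (hK i j)
            rw [Matrix.mul_apply]
            exact Finset.dvd_sum fun l _ => dvd_mul_of_dvd_left (iht i l) _
        exact this M (m / p) hM i j
      have hN0 : N = 0 := key_prime hpp hNpow hNd
      have hpow1 : (1 + M) ^ (m / p) = 1 := by
        have := hN0
        rw [hN, sub_eq_zero] at this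
        exact this
      have hmp : m / p < m := Nat.div_lt_self (by omega) hpp.one_lt
      have hmp1 : 1 ≤ m / p := Nat.one_le_div_iff hpp.pos |>.mpr (Nat.le_of_dvd (by omega) hpd)
      exact ih (m / p) hmp hmp1 M hpow1 hM

private lemma torsion_ker (A : GL (Fin n) ℤ) (hA : IsOfFinOrder A)
    (hker : Matrix.GeneralLinearGroup.map (n := Fin n) (Int.castRingHom (ZMod 3)) A = 1) :
    A = 1 := by
  set M : Matrix (Fin n) (Fin n) ℤ := (A : Matrix (Fin n) (Fin n) ℤ) - 1 with hMdef
  have h1M : (1 : Matrix (Fin n) (Fin n) ℤ) + M = A := by rw [hMdef]; abel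
  have hm : (1 + M) ^ (orderOf A) = 1 := by
    rw [h1M, ← Units.val_pow_eq_pow_val, pow_orderOf_eq_one A, Units.val_one]
  have hM : ∀ i j, (3:ℤ) ∣ M i j := by
    intro i j
    rw [show (3:ℤ) = ((3:ℕ):ℤ) by norm_num, ← ZMod.intCast_zmod_eq_zero_iff_dvd]
    have := congrFun (congrFun (congrArg (fun (B : GL (Fin n) (ZMod 3)) => (B : Matrix (Fin n) (Fin n) (ZMod 3))) hker) i) j
    simp only [Matrix.GeneralLinearGroup.map] at this
    have h2 : ((A i j : ℤ) : ZMod 3) = (1 : Matrix (Fin n) (Fin n) (ZMod 3)) i j := by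
      simpa using this
    push_cast [hMdef]
    simp only [Matrix.sub_apply]
    rw [show ((A:Matrix (Fin n) (Fin n) ℤ) i j : ℤ) = A i j from rfl] at *
    push_cast
    rw [h2]
    by_cases hij : i = j <;> simp [Matrix.one_apply, hij]
  have hM0 : M = 0 := key_all (orderOf A) (hA.orderOf_pos) M hm hM
  have hA1 : (A : Matrix (Fin n) (Fin n) ℤ) = 1 := by
    have h3 := hMdef ▸ hM0
    rwa [sub_eq_zero] at h3
  exact Units.ext hA1


end MinkowskiAux

/-- Minkowski's theorem: for every positive integer `n` there are, up to isomorphism, only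
finitely many finite subgroups of `GL(n, ℤ)` (every finite subgroup is isomorphic to one of
finitely many subgroups), and in particular there is a uniform bound `c` on the cardinality
of any finite subgroup of `GL(n, ℤ)`. -/
theorem minkowski_finite_subgroups (n : ℕ) (hn : 0 < n) :
    (∃ (k : ℕ) (Gs : Fin k → Subgroup (GL (Fin n) ℤ)),
      (∀ i, Finite (Gs i)) ∧
      ∀ H : Subgroup (GL (Fin n) ℤ), Finite H → ∃ i, Nonempty (H ≃* Gs i)) ∧
    ∃ c : ℕ, 0 < c ∧ ∀ H : Subgroup (GL (Fin n) ℤ), Finite H → Nat.card H ≤ c := by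
  classical
  set π : GL (Fin n) ℤ →* GL (Fin n) (ZMod 3) :=
    Matrix.GeneralLinearGroup.map (Int.castRingHom (ZMod 3)) with hπdef
  have hKfin : Finite (GL (Fin n) (ZMod 3)) := inferInstance
  have hSubfin : Finite (Subgroup (GL (Fin n) (ZMod 3))) :=
    Finite.of_injective _ SetLike.coe_injective
  have hinj : ∀ H : Subgroup (GL (Fin n) ℤ), Finite H →
      Function.Injective (π.comp H.subtype) := by
    intro H hH
    rw [injective_iff_map_eq_one]
    intro a ha
    have hfin : IsOfFinOrder a := isOfFinOrder_of_finite a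
    obtain ⟨m, hm0, hm⟩ := hfin.exists_pow_eq_one
    have hvfin : IsOfFinOrder (a : GL (Fin n) ℤ) := by
      rw [isOfFinOrder_iff_pow_eq_one]
      exact ⟨m, hm0, by rw [← SubmonoidClass.coe_pow, hm]; rfl⟩
    have := torsion_ker (a : GL (Fin n) ℤ) hvfin ha
    exact Subtype.ext this
  -- the iso from H to its image
  have hiso : ∀ H : Subgroup (GL (Fin n) ℤ), Finite H →
      Nonempty (H ≃* (π.comp H.subtype).range) := fun H hH =>
    ⟨MonoidHom.ofInjective (hinj H hH)⟩
  constructor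
  · obtain ⟨k, ⟨e⟩⟩ := Finite.exists_equiv_fin (Subgroup (GL (Fin n) (ZMod 3)))
    set g : Subgroup (GL (Fin n) (ZMod 3)) → Subgroup (GL (Fin n) ℤ) := fun kk =>
      if h : ∃ H : Subgroup (GL (Fin n) ℤ), Finite H ∧ (π.comp H.subtype).range = kk
      then h.choose else ⊥ with hg
    refine ⟨k, fun i => g (e.symm i), ?_, ?_⟩
    · intro i
      by_cases h : ∃ H : Subgroup (GL (Fin n) ℤ), Finite H ∧ (π.comp H.subtype).range = e.symm i
      · simp only [hg, dif_pos h]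
        exact h.choose_spec.1
      · simp only [hg, dif_neg h]
        infer_instance
    · intro H hH
      refine ⟨e (π.comp H.subtype).range, ?_⟩
      have h : ∃ H' : Subgroup (GL (Fin n) ℤ), Finite H' ∧
          (π.comp H'.subtype).range = e.symm (e (π.comp H.subtype).range) := by
        refine ⟨H, hH, by rw [Equiv.symm_apply_apply]⟩
      have hgeq : g (e.symm (e (π.comp H.subtype).range)) = h.choose := dif_pos h
      show Nonempty (H ≃* (g (e.symm (e (π.comp H.subtype).range))))
      rw [hgeq]
      obtain ⟨hfin', hrange'⟩ := h.choose_spec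
      obtain ⟨e1⟩ := hiso H hH
      obtain ⟨e2⟩ := hiso h.choose hfin'
      have hrange'' : (π.comp h.choose.subtype).range = (π.comp H.subtype).range :=
        hrange'.trans (Equiv.symm_apply_apply e _)
      refine ⟨e1.trans ((MulEquiv.subgroupCongr hrange'').symm.trans e2.symm)⟩
  · refine ⟨Nat.card (GL (Fin n) (ZMod 3)), Nat.card_pos, ?_⟩
    intro H hH
    obtain ⟨e1⟩ := hiso H hH
    rw [Nat.card_congr e1.toEquiv]
    exact Nat.card_le_card_of_injective _ Subtype.val_injective
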